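/- (Lemma 1) Let Q_x ⊆ ℝ^n be convex and bounded with ‖x₁ - x₂‖₂ ≤ D for all x₁, x₂ ∈ Q_x, and let Q_y ⊆ ℝ^m be convex and compact. Let ν ∈ [0,1], L_xx, L_xy > 0, μ_y > 0, and let f : Q_x × Q_y → ℝ be differentiable with ‖∇_x f(x,y) - ∇_x f(x',y)‖₂ ≤ L_xx‖x - x'‖₂^ν and ‖∇_x f(x,y) - ∇_x f(x,y')‖₂ ≤ L_xy‖y - y'‖₂^ν for all x, x' ∈ Q_x, y, y' ∈ Q_y, and with f(x,·) μ_y-strongly concave on Q_y for every x ∈ Q_x. Let y*(x) be the unique maximizer of f(x,·) over Q_y. Then for all x₁, x₂ ∈ Q_x: ‖∇_x f(x₁, y*(x₁)) - ∇_x f(x₂, y*(x₂))‖₂ ≤ ( L_xy (2L_xy/μ_y)^{ν/(2-ν)} + L_xx D^{(ν-ν²)/(2-ν)} ) ‖x₁ - x₂‖₂^{ν/(2-ν)}. -/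

import Mathlib

open scoped RealInnerProductSpace

private lemma seg_hasDerivAt {m : ℕ} {g : EuclideanSpace ℝ (Fin m) → ℝ}
    {G u d : EuclideanSpace ℝ (Fin m)} {t : ℝ}
    (hg : HasGradientAt g G (u + t • d)) :
    HasDerivAt (fun s : ℝ => g (u + s • d)) ⟪G, d⟫ t := by
  have hγ : HasDerivAt (fun s : ℝ => u + s • d) d t := by
    simpa using ((hasDerivAt_id t).smul_const d).const_add u
  have h := hg.hasFDerivAt.comp_hasDerivAt t hγ
  simpa [InnerProductSpace.toDual_apply_apply, Function.comp_def] using h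

private lemma deriv_nonpos_of_max {φ : ℝ → ℝ} {c : ℝ}
    (hd : HasDerivAt φ c 0) (hmax : ∀ t ∈ Set.Ioc (0:ℝ) 1, φ t ≤ φ 0) : c ≤ 0 := by
  have h := hasDerivAt_iff_tendsto_slope.mp hd
  have h2 : Filter.Tendsto (slope φ 0) (nhdsWithin 0 (Set.Ioi 0)) (nhds c) :=
    h.mono_left (nhdsWithin_mono _ (fun x hx => Set.mem_compl_singleton_iff.mpr (ne_of_gt hx)))
  refine le_of_tendsto h2 ?_
  filter_upwards [Ioc_mem_nhdsGT_of_mem (Set.mem_Ico.mpr ⟨le_refl (0:ℝ), zero_lt_one⟩)] with t ht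
  have h3 := hmax t ht
  rw [slope_def_field]
  apply div_nonpos_of_nonpos_of_nonneg <;> simp [h3, sub_nonneg, le_of_lt ht.1]

private lemma quad_decay {m : ℕ} {Qy : Set (EuclideanSpace ℝ (Fin m))}
    (hQy : Convex ℝ Qy) {μ : ℝ} (hμ : 0 < μ)
    {g : EuclideanSpace ℝ (Fin m) → ℝ} {gy : EuclideanSpace ℝ (Fin m) → EuclideanSpace ℝ (Fin m)}
    (hdiff : ∀ y ∈ Qy, HasGradientAt g (gy y) y)
    (hconc : ∀ y₁ ∈ Qy, ∀ y₂ ∈ Qy, ⟪gy y₂ - gy y₁, y₁ - y₂⟫ ≥ μ * ‖y₁ - y₂‖ ^ 2)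
    {u : EuclideanSpace ℝ (Fin m)} (hu : u ∈ Qy) (hmax : ∀ y ∈ Qy, g y ≤ g u)
    {v : EuclideanSpace ℝ (Fin m)} (hv : v ∈ Qy) :
    g v + μ / 2 * ‖v - u‖ ^ 2 ≤ g u := by
  set d := v - u with hd
  have hseg : ∀ t ∈ Set.Icc (0:ℝ) 1, u + t • d ∈ Qy := by
    intro t ht
    have h : u + t • d = (1 - t) • u + t • v := by rw [hd]; module
    rw [h]
    exact hQy hu hv (by linarith [ht.1, ht.2]) ht.1 (by ring)
  set c := ⟪gy u, d⟫ with hc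
  have hu0 : u + (0:ℝ) • d = u := by simp
  have hder0 : HasDerivAt (fun s : ℝ => g (u + s • d)) c 0 :=
    seg_hasDerivAt (by rw [hu0]; exact hdiff u hu)
  have hVI : c ≤ 0 := by
    apply deriv_nonpos_of_max hder0
    intro t ht
    show g (u + t • d) ≤ g (u + (0:ℝ) • d)
    rw [hu0]
    exact hmax _ (hseg t ⟨le_of_lt ht.1, ht.2⟩)
  set K := ‖d‖ ^ 2 with hK
  set ψ : ℝ → ℝ := fun t => g (u + t • d) - t * c + μ / 2 * K * t ^ 2 with hψ
  have hder : ∀ t ∈ Set.Icc (0:ℝ) 1,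
      HasDerivAt ψ (⟪gy (u + t • d), d⟫ - c + μ / 2 * K * (2 * t)) t := by
    intro t ht
    have h1 : HasDerivAt (fun s : ℝ => g (u + s • d)) ⟪gy (u + t • d), d⟫ t :=
      seg_hasDerivAt (hdiff _ (hseg t ht))
    have h2 : HasDerivAt (fun s : ℝ => s * c) c t := by
      simpa using (hasDerivAt_id t).mul_const c
    have h3 : HasDerivAt (fun s : ℝ => μ / 2 * K * s ^ 2) (μ / 2 * K * (2 * t)) t := by
      have := (hasDerivAt_pow 2 t).const_mul (μ / 2 * K)
      simpa [mul_comm, mul_assoc, mul_left_comm] using this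
    exact (h1.sub h2).add h3
  have hmono : AntitoneOn ψ (Set.Icc 0 1) := by
    apply antitoneOn_of_deriv_nonpos (convex_Icc 0 1)
    · intro t ht
      exact (hder t ht).continuousAt.continuousWithinAt
    · intro t ht
      rw [interior_Icc] at ht
      exact ((hder t ⟨le_of_lt ht.1, le_of_lt ht.2⟩).differentiableAt).differentiableWithinAt
    · intro t ht
      rw [interior_Icc] at ht
      rw [(hder t ⟨le_of_lt ht.1, le_of_lt ht.2⟩).deriv]
      have hyt : u + t • d ∈ Qy := hseg t ⟨le_of_lt ht.1, le_of_lt ht.2⟩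
      have hcc := hconc u hu (u + t • d) hyt
      have e1 : u - (u + t • d) = -(t • d) := by abel
      have e2 : ‖u - (u + t • d)‖ ^ 2 = t ^ 2 * K := by
        rw [e1, norm_neg, norm_smul, Real.norm_eq_abs, mul_pow, hK, sq_abs]
      have e3 : ⟪gy (u + t • d) - gy u, u - (u + t • d)⟫
          = -(t * (⟪gy (u + t • d), d⟫ - c)) := by
        rw [e1, inner_neg_right, real_inner_smul_right, inner_sub_left, hc]
      rw [e2, e3] at hcc
      have hK0 : 0 ≤ K := by rw [hK]; positivity
      nlinarith [ht.1, hcc, mul_nonneg (mul_nonneg hμ.le (le_of_lt ht.1)) hK0]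
  have h01 := hmono (Set.left_mem_Icc.mpr zero_le_one) (Set.right_mem_Icc.mpr zero_le_one)
      zero_le_one
  have he0 : ψ 0 = g u := by simp [hψ]
  have hv1 : u + d = v := by rw [hd]; abel
  have he1 : ψ 1 = g v - c + μ / 2 * K := by simp [hψ, hv1]
  rw [he0, he1] at h01
  have hKd : K = ‖v - u‖ ^ 2 := by rw [hK, hd]
  linarith [hVI, h01, hKd.ge, hKd.le]

/-- Lemma 1: Hölder continuity of `∇g(x) = ∇ₓ f(x, y*(x))` where
`g(x) = max_{y ∈ Q_y} f(x,y)`, under Hölder conditions on `∇ₓ f` in both arguments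
and `μ_y`-strong concavity of `f(x,·)`:
`‖∇ₓf(x₁,y*(x₁)) - ∇ₓf(x₂,y*(x₂))‖ ≤ (L_xy (2L_xy/μ_y)^{ν/(2-ν)} + L_xx D^{(ν-ν²)/(2-ν)}) ‖x₁-x₂‖^{ν/(2-ν)}`. -/
theorem stmt_3 {n m : ℕ}
    (Qx : Set (EuclideanSpace ℝ (Fin n))) (Qy : Set (EuclideanSpace ℝ (Fin m)))
    (hQx : Convex ℝ Qx) (hQy : Convex ℝ Qy) (hQyc : IsCompact Qy)
    (D : ℝ) (hD : 0 < D) (hdiam : ∀ x₁ ∈ Qx, ∀ x₂ ∈ Qx, ‖x₁ - x₂‖ ≤ D)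
    (ν : ℝ) (hν : ν ∈ Set.Icc (0 : ℝ) 1)
    (Lxx Lxy μy : ℝ) (hLxx : 0 < Lxx) (hLxy : 0 < Lxy) (hμy : 0 < μy)
    (f : EuclideanSpace ℝ (Fin n) → EuclideanSpace ℝ (Fin m) → ℝ)
    (fx : EuclideanSpace ℝ (Fin n) → EuclideanSpace ℝ (Fin m) → EuclideanSpace ℝ (Fin n))
    (fy : EuclideanSpace ℝ (Fin n) → EuclideanSpace ℝ (Fin m) → EuclideanSpace ℝ (Fin m))
    (hdiffx : ∀ x ∈ Qx, ∀ y ∈ Qy, HasGradientAt (fun x' => f x' y) (fx x y) x)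
    (hdiffy : ∀ x ∈ Qx, ∀ y ∈ Qy, HasGradientAt (fun y' => f x y') (fy x y) y)
    (hHolderx : ∀ x ∈ Qx, ∀ x' ∈ Qx, ∀ y ∈ Qy,
      ‖fx x y - fx x' y‖ ≤ Lxx * ‖x - x'‖ ^ ν)
    (hHoldery : ∀ x ∈ Qx, ∀ y ∈ Qy, ∀ y' ∈ Qy,
      ‖fx x y - fx x y'‖ ≤ Lxy * ‖y - y'‖ ^ ν)
    -- `f(x,·)` is `μ_y`-strongly concave on `Q_y` for every `x ∈ Q_x`
    (hconc : ∀ x ∈ Qx, ∀ y₁ ∈ Qy, ∀ y₂ ∈ Qy,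
      ⟪fy x y₂ - fy x y₁, y₁ - y₂⟫ ≥ μy * ‖y₁ - y₂‖ ^ 2)
    -- `y*(x)` is the (unique) maximizer of `f(x,·)` over `Q_y`
    (ystar : EuclideanSpace ℝ (Fin n) → EuclideanSpace ℝ (Fin m))
    (hystar : ∀ x ∈ Qx, ystar x ∈ Qy ∧ ∀ y ∈ Qy, f x y ≤ f x (ystar x)) :
    ∀ x₁ ∈ Qx, ∀ x₂ ∈ Qx,
      ‖fx x₁ (ystar x₁) - fx x₂ (ystar x₂)‖ ≤
        (Lxy * (2 * Lxy / μy) ^ (ν / (2 - ν)) + Lxx * D ^ ((ν - ν ^ 2) / (2 - ν))) *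
          ‖x₁ - x₂‖ ^ (ν / (2 - ν)) := by
  intro x₁ hx₁ x₂ hx₂
  obtain ⟨hν0, hν1⟩ := hν
  have h2ν : (0:ℝ) < 2 - ν := by linarith
  by_cases hx12 : x₁ = x₂
  · rw [hx12, sub_self, norm_zero]
    apply mul_nonneg
    · apply add_nonneg
      · exact mul_nonneg hLxy.le (Real.rpow_nonneg (div_nonneg (by linarith) hμy.le) _)
      · exact mul_nonneg hLxx.le (Real.rpow_nonneg hD.le _)
    · exact Real.rpow_nonneg (norm_nonneg _) _
  -- notation
  set y₁ := ystar x₁ with hy1def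
  set y₂ := ystar x₂ with hy2def
  have hy₁ : y₁ ∈ Qy := (hystar x₁ hx₁).1
  have hy₂ : y₂ ∈ Qy := (hystar x₂ hx₂).1
  set a := ‖y₁ - y₂‖ with ha
  set r := ‖x₁ - x₂‖ with hr
  have ha0 : 0 ≤ a := norm_nonneg _
  have hrpos : 0 < r := by
    rw [hr]
    exact norm_sub_pos_iff.mpr hx12
  have hr0 : 0 ≤ r := hrpos.le
  set e₁ := ν / (2 - ν) with he1
  set e₂ := (ν - ν ^ 2) / (2 - ν) with he2
  have he10 : 0 ≤ e₁ := div_nonneg hν0 h2ν.le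
  have he20 : 0 ≤ e₂ := div_nonneg (by nlinarith) h2ν.le
  -- strong concavity decrements
  have key₁ : f x₁ y₂ + μy / 2 * ‖y₂ - y₁‖ ^ 2 ≤ f x₁ y₁ :=
    quad_decay hQy hμy (fun y hy => hdiffy x₁ hx₁ y hy)
      (fun p hp q hq => hconc x₁ hx₁ p hp q hq) hy₁ (hystar x₁ hx₁).2 hy₂
  have key₂ : f x₂ y₁ + μy / 2 * ‖y₁ - y₂‖ ^ 2 ≤ f x₂ y₂ :=
    quad_decay hQy hμy (fun y hy => hdiffy x₂ hx₂ y hy)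
      (fun p hp q hq => hconc x₂ hx₂ p hp q hq) hy₂ (hystar x₂ hx₂).2 hy₁
  -- mean value bound in x
  set ee := x₂ - x₁ with hee
  have hsegx : ∀ t ∈ Set.Icc (0:ℝ) 1, x₁ + t • ee ∈ Qx := by
    intro t ht
    have h : x₁ + t • ee = (1 - t) • x₁ + t • x₂ := by rw [hee]; module
    rw [h]
    exact hQx hx₁ hx₂ (by linarith [ht.1, ht.2]) ht.1 (by ring)
  set φ : ℝ → ℝ := fun t => f (x₁ + t • ee) y₁ - f (x₁ + t • ee) y₂ with hφ
  set φ' : ℝ → ℝ := fun t => ⟪fx (x₁ + t • ee) y₁ - fx (x₁ + t • ee) y₂, ee⟫ with hφ'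
  have hφd : ∀ t ∈ Set.Icc (0:ℝ) 1, HasDerivAt φ (φ' t) t := by
    intro t ht
    have hxt : x₁ + t • ee ∈ Qx := hsegx t ht
    have h1 := seg_hasDerivAt (hdiffx _ hxt y₁ hy₁)
    have h2 := seg_hasDerivAt (hdiffx _ hxt y₂ hy₂)
    have h3 := h1.sub h2
    simpa [hφ, hφ', inner_sub_left, Pi.sub_def] using h3
  have hC : ∀ t ∈ Set.Icc (0:ℝ) 1, ‖φ' t‖ ≤ Lxy * a ^ ν * r := by
    intro t ht
    have hxt := hsegx t ht
    have hb := hHoldery _ hxt y₁ hy₁ y₂ hy₂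
    have hee_r : ‖ee‖ = r := by rw [hee, hr, norm_sub_rev]
    calc ‖φ' t‖ ≤ ‖fx (x₁ + t • ee) y₁ - fx (x₁ + t • ee) y₂‖ * ‖ee‖ := by
          rw [hφ']
          exact norm_inner_le_norm _ _
      _ ≤ Lxy * a ^ ν * r := by
          rw [hee_r]
          exact mul_le_mul_of_nonneg_right hb hr0
  have hMVT := Convex.norm_image_sub_le_of_norm_hasDerivWithin_le
      (fun t ht => (hφd t ht).hasDerivWithinAt) hC (convex_Icc 0 1)
      (Set.left_mem_Icc.mpr zero_le_one) (Set.right_mem_Icc.mpr zero_le_one)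
  have hΔ : φ 0 - φ 1 ≤ Lxy * a ^ ν * r := by
    have h4 : ‖φ 1 - φ 0‖ = |φ 1 - φ 0| := Real.norm_eq_abs _
    have h5 : ‖(1:ℝ) - 0‖ = 1 := by norm_num
    rw [h4, h5, mul_one] at hMVT
    calc φ 0 - φ 1 ≤ |φ 0 - φ 1| := le_abs_self _
      _ = |φ 1 - φ 0| := abs_sub_comm _ _
      _ ≤ Lxy * a ^ ν * r := hMVT
  have hφ0 : φ 0 = f x₁ y₁ - f x₁ y₂ := by simp [hφ]
  have hx2e : x₁ + ee = x₂ := by rw [hee]; abel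
  have hφ1 : φ 1 = f x₂ y₁ - f x₂ y₂ := by simp [hφ, hx2e]
  have hmain : μy * a ^ (2:ℕ) ≤ Lxy * a ^ ν * r := by
    have haa : ‖y₂ - y₁‖ = a := by rw [ha, norm_sub_rev]
    rw [haa] at key₁
    rw [hφ0, hφ1] at hΔ
    linarith
  -- rpow manipulations
  have hKpos : (0:ℝ) < 2 * Lxy / μy := by positivity
  have step1 : a ^ ((2:ℝ) - ν) ≤ (2 * Lxy / μy) * r := by
    rcases eq_or_lt_of_le ha0 with ha0' | hapos
    · rw [← ha0', Real.zero_rpow (by linarith : (2:ℝ) - ν ≠ 0)]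
      positivity
    · have hsplit : (a : ℝ) ^ (2:ℕ) = a ^ ν * a ^ ((2:ℝ) - ν) := by
        rw [← Real.rpow_natCast a 2, ← Real.rpow_add hapos]
        norm_num
      rw [hsplit] at hmain
      have hP : 0 < a ^ ν := Real.rpow_pos_of_pos hapos ν
      rw [div_mul_eq_mul_div, le_div_iff₀ hμy]
      nlinarith [hmain, mul_pos (mul_pos hLxy hP) hrpos, mul_pos hP hrpos]
  have step2 : a ^ ν ≤ (2 * Lxy / μy) ^ e₁ * r ^ e₁ := by
    have heq : (2 - ν) * e₁ = ν := by
      rw [he1]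
      field_simp
    have h1 : a ^ ν = (a ^ ((2:ℝ) - ν)) ^ e₁ := by
      rw [← Real.rpow_mul ha0, heq]
    rw [h1]
    calc (a ^ ((2:ℝ) - ν)) ^ e₁ ≤ ((2 * Lxy / μy) * r) ^ e₁ :=
          Real.rpow_le_rpow (Real.rpow_nonneg ha0 _) step1 he10
      _ = (2 * Lxy / μy) ^ e₁ * r ^ e₁ := Real.mul_rpow hKpos.le hr0
  have step3 : r ^ ν = r ^ e₂ * r ^ e₁ := by
    rw [← Real.rpow_add hrpos]
    congr 1
    rw [he1, he2]
    field_simp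
    ring
  have step4 : r ^ e₂ ≤ D ^ e₂ := Real.rpow_le_rpow hr0 (hdiam x₁ hx₁ x₂ hx₂) he20
  have hfin1 := hHoldery x₁ hx₁ y₁ hy₁ y₂ hy₂
  have hfin2 := hHolderx x₁ hx₁ x₂ hx₂ y₂ hy₂
  calc ‖fx x₁ y₁ - fx x₂ y₂‖
      ≤ ‖fx x₁ y₁ - fx x₁ y₂‖ + ‖fx x₁ y₂ - fx x₂ y₂‖ := by
        have h : fx x₁ y₁ - fx x₂ y₂ = (fx x₁ y₁ - fx x₁ y₂) + (fx x₁ y₂ - fx x₂ y₂) := by abel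
        rw [h]
        exact norm_add_le _ _
    _ ≤ Lxy * a ^ ν + Lxx * r ^ ν := by
        exact add_le_add hfin1 hfin2
    _ ≤ Lxy * ((2 * Lxy / μy) ^ e₁ * r ^ e₁) + Lxx * (D ^ e₂ * r ^ e₁) := by
        have h3 : Lxx * r ^ ν ≤ Lxx * (D ^ e₂ * r ^ e₁) := by
          rw [step3]
          exact mul_le_mul_of_nonneg_left
            (mul_le_mul_of_nonneg_right step4 (Real.rpow_nonneg hr0 e₁)) hLxx.le
        have h4 := mul_le_mul_of_nonneg_left step2 hLxy.le
        linarith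
    _ = (Lxy * (2 * Lxy / μy) ^ e₁ + Lxx * D ^ e₂) * r ^ e₁ := by ring
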